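/- For every prime p and every integer k ≥ 2, every Z_p-sequence of length p + k in which no element appears more than k times contains a subsequence of exactly p terms summing to zero; i.e., s^(k)(Z_p) ≤ p + k. -/

import Mathlib

open Finset Pointwise

lemma cd_iter (p : ℕ) (hp : p.Prime) {ι : Type*} (s : Finset ι) (hs : s.Nonempty)
    (D : ι → Finset (ZMod p)) (hne : ∀ i ∈ s, (D i).Nonempty) :
    ∃ T : Finset (ZMod p),
      (∀ t ∈ T, ∃ x : ι → ZMod p, (∀ i ∈ s, x i ∈ D i) ∧ ∑ i ∈ s, x i = t) ∧
      min p (∑ i ∈ s, (D i).card + 1 - s.card) ≤ T.card := by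
  classical
  induction hs using Finset.Nonempty.cons_induction with
  | singleton a =>
      refine ⟨D a, ?_, ?_⟩
      · intro t ht
        exact ⟨fun _ => t, by simpa using ht, by simp⟩
      · simp
  | cons a s ha hs ih =>
      obtain ⟨T, hTmem, hTcard⟩ := ih (fun i hi => hne i (Finset.mem_cons_of_mem hi))
      have hDa : (D a).Nonempty := hne a (Finset.mem_cons_self a s)
      have hSc : s.card ≤ ∑ i ∈ s, (D i).card := by
        calc s.card = ∑ i ∈ s, 1 := by simp
        _ ≤ ∑ i ∈ s, (D i).card := by
            refine Finset.sum_le_sum fun i hi => ?_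
            exact Finset.card_pos.2 (hne i (Finset.mem_cons_of_mem hi))
      have hT : T.Nonempty :=
        Finset.card_pos.1 (lt_of_lt_of_le (lt_min hp.pos (by omega)) hTcard)
      refine ⟨D a + T, ?_, ?_⟩
      · intro t ht
        rw [Finset.mem_add] at ht
        obtain ⟨y, hy, z, hz, hyz⟩ := ht
        obtain ⟨x, hx, hxsum⟩ := hTmem z hz
        refine ⟨Function.update x a y, ?_, ?_⟩
        · intro i hi
          rcases Finset.mem_cons.1 hi with rfl | hi
          · simpa using hy
          · rw [Function.update_of_ne (fun h => ha (by rw [← h]; exact hi))]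
            exact hx i hi
        · rw [Finset.sum_cons, Function.update_self]
          have : ∑ i ∈ s, Function.update x a y i = ∑ i ∈ s, x i := by
            refine Finset.sum_congr rfl fun i hi => ?_
            exact Function.update_of_ne (fun h => ha (by rw [← h]; exact hi)) _ _
          rw [this, hxsum, hyz]
      · have hCD := ZMod.cauchy_davenport hp hDa hT
        rw [Finset.sum_cons, Finset.card_cons]
        rcases le_or_gt p T.card with h | h
        · calc min p _ ≤ p := min_le_left _ _
          _ ≤ min p ((D a).card + T.card - 1) := by
              refine le_min le_rfl ?_
              have : 1 ≤ (D a).card := Finset.card_pos.2 hDa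
              omega
          _ ≤ (D a + T).card := hCD
        · have hXle : ∑ i ∈ s, (D i).card + 1 - s.card ≤ T.card := by
            rcases le_total p (∑ i ∈ s, (D i).card + 1 - s.card) with hle | hle
            · rw [min_eq_left hle] at hTcard; omega
            · rwa [min_eq_right hle] at hTcard
          have hA : 1 ≤ (D a).card := Finset.card_pos.2 hDa
          calc min p ((D a).card + ∑ i ∈ s, (D i).card + 1 - (s.card + 1))
              ≤ min p ((D a).card + T.card - 1) := min_le_min le_rfl (by omega)
          _ ≤ (D a + T).card := hCD

theorem s_k_upper_bound_prime (p : ℕ) (hp : p.Prime) (k : ℕ) (hk : 2 ≤ k)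
    (f : Fin (p + k) → ZMod p)
    (hmult : ∀ z : ZMod p, (Finset.univ.filter fun i => f i = z).card ≤ k) :
    ∃ I : Finset (Fin (p + k)), I.card = p ∧ ∑ i ∈ I, f i = 0 := by
  classical
  haveI : NeZero p := ⟨hp.pos.ne'⟩
  have hk0 : 0 < k := by omega
  set w : Fin (p + k) → ℕ := fun i => (f i).val with hw
  set σ : Equiv.Perm (Fin (p + k)) := Tuple.sort w with hσ
  set g : Fin (p + k) → ZMod p := fun i => f (σ i) with hg
  have hmono : Monotone (fun i => (g i).val) := Tuple.monotone_sort w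
  -- multiplicity bound for the sorted sequence
  have hgcount : ∀ z : ZMod p, (Finset.univ.filter fun i => g i = z).card ≤ k := by
    intro z
    have himg : (Finset.univ.filter fun i => g i = z) =
        (Finset.univ.filter fun i => f i = z).image σ.symm := by
      ext i
      simp only [Finset.mem_filter, Finset.mem_image, Finset.mem_univ, true_and, hg]
      constructor
      · intro h
        exact ⟨σ i, h, σ.symm_apply_apply i⟩
      · rintro ⟨j, hj, rfl⟩
        simpa [Equiv.apply_symm_apply] using hj
    rw [himg, Finset.card_image_of_injective _ σ.symm.injective]
    exact hmult z
  -- values strictly increase at distance k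
  have hstep : ∀ i j : Fin (p + k), (i : ℕ) + k ≤ (j : ℕ) → (g i).val < (g j).val := by
    intro i j hij
    by_contra hle
    push_neg at hle
    have hij' : i ≤ j := by
      rw [Fin.le_def]; omega
    have heq : ∀ t, i ≤ t → t ≤ j → g t = g i := by
      intro t h1 h2
      have l1 : (g i).val ≤ (g t).val := hmono h1
      have l2 : (g t).val ≤ (g j).val := hmono h2
      exact ZMod.val_injective p (by omega)
    have hsub : Finset.Icc i j ⊆ Finset.univ.filter fun t => g t = g i := by
      intro t ht
      rcases Finset.mem_Icc.1 ht with ⟨h1, h2⟩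
      simp [heq t h1 h2]
    have hcard := Finset.card_le_card hsub
    rw [Fin.card_Icc] at hcard
    have := hgcount (g i)
    omega
  -- residue classes mod k
  set cl : Fin (p + k) → Fin k := fun j => ⟨(j : ℕ) % k, Nat.mod_lt _ hk0⟩ with hcl
  set C : Fin k → Finset (Fin (p + k)) := fun r => Finset.univ.filter fun j => cl j = r
    with hC
  have hCsum : ∑ r : Fin k, (C r).card = p + k := by
    have h := Finset.card_eq_sum_card_fiberwise
      (s := (Finset.univ : Finset (Fin (p + k)))) (t := Finset.univ) (f := cl)
      (fun a _ => Finset.mem_univ _)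
    simpa [hC] using h.symm
  have hCne : ∀ r : Fin k, (C r).Nonempty := by
    intro r
    refine ⟨⟨(r : ℕ), by omega⟩, ?_⟩
    simp only [hC, Finset.mem_filter, Finset.mem_univ, true_and, hcl]
    exact Fin.ext (by simpa using Nat.mod_eq_of_lt r.isLt)
  have hCinj : ∀ r : Fin k, Set.InjOn g (C r) := by
    intro r i hi j hj hgij
    by_contra hne
    have hmod : (i : ℕ) % k = (j : ℕ) % k := by
      have h1 : cl i = r := (Finset.mem_filter.1 hi).2
      have h2 : cl j = r := (Finset.mem_filter.1 hj).2
      have := h1.trans h2.symm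
      simpa [hcl, Fin.ext_iff] using this
    have key : ∀ a b : Fin (p + k), (a : ℕ) < (b : ℕ) → (a : ℕ) % k = (b : ℕ) % k →
        g a = g b → False := by
      intro a b hab hm hgab
      have hdvd : k ∣ (b : ℕ) - (a : ℕ) := (Nat.modEq_iff_dvd' hab.le).1 hm
      have hk_le : k ≤ (b : ℕ) - (a : ℕ) := Nat.le_of_dvd (by omega) hdvd
      have := hstep a b (by omega)
      rw [hgab] at this
      omega
    rcases lt_trichotomy ((i : ℕ)) ((j : ℕ)) with h | h | h
    · exact key i j h hmod hgij
    · exact hne (Fin.ext h)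
    · exact key j i h hmod.symm hgij.symm
  set D : Fin k → Finset (ZMod p) := fun r => (C r).image g with hD
  have hDcard : ∀ r, (D r).card = (C r).card := fun r =>
    Finset.card_image_of_injOn (hCinj r)
  haveI : Nonempty (Fin k) := ⟨⟨0, hk0⟩⟩
  obtain ⟨T, hTmem, hTcard⟩ := cd_iter p hp Finset.univ Finset.univ_nonempty D
    (fun r _ => (hCne r).image g)
  have hsumD : ∑ r : Fin k, (D r).card = p + k := by
    rw [Finset.sum_congr rfl fun r _ => hDcard r]
    exact hCsum
  have hple : p ≤ T.card := by
    rw [hsumD, Finset.card_univ, Fintype.card_fin] at hTcard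
    have : min p (p + k + 1 - k) = p := by
      rw [min_eq_left (by omega)]
    omega
  have hTuniv : T = Finset.univ := by
    apply Finset.eq_univ_of_card
    have h1 : Fintype.card (ZMod p) = p := ZMod.card p
    have h2 : T.card ≤ Fintype.card (ZMod p) := Finset.card_le_univ T
    omega
  obtain ⟨x, hx, hxsum⟩ := hTmem (∑ i, f i) (hTuniv ▸ Finset.mem_univ _)
  have hpre : ∀ r : Fin k, ∃ j, j ∈ C r ∧ g j = x r := by
    intro r
    rcases Finset.mem_image.1 (hx r (Finset.mem_univ r)) with ⟨j, hj, hgj⟩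
    exact ⟨j, hj, hgj⟩
  choose d hd hgd using hpre
  have hdinj : Function.Injective d := by
    intro r r' h
    have h1 : cl (d r) = r := (Finset.mem_filter.1 (hd r)).2
    have h2 : cl (d r') = r' := (Finset.mem_filter.1 (hd r')).2
    rw [← h1, ← h2, h]
  set J : Finset (Fin (p + k)) := Finset.univ.image fun r => σ (d r) with hJ
  have hinj : Function.Injective (fun r => σ (d r)) := fun a b h => hdinj (σ.injective h)
  have hJcard : J.card = k := by
    rw [hJ, Finset.card_image_of_injective _ hinj]
    simp
  refine ⟨Jᶜ, ?_, ?_⟩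
  · rw [Finset.card_compl, hJcard, Fintype.card_fin]
    omega
  · have hJsum : ∑ i ∈ J, f i = ∑ i, f i := by
      rw [hJ, Finset.sum_image (fun r _ r' _ h => hinj h)]
      calc ∑ r : Fin k, f (σ (d r)) = ∑ r : Fin k, x r :=
            Finset.sum_congr rfl fun r _ => hgd r
      _ = ∑ i, f i := hxsum
    have hsplit : ∑ i ∈ Jᶜ, f i + ∑ i ∈ J, f i = ∑ i, f i :=
      Finset.sum_compl_add_sum J f
    rw [hJsum] at hsplit
    exact add_eq_right.1 hsplit
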